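/- Let Γ be a countable group acting on a standard Borel space X by Borel automorphisms, and let μ, ν be Borel probability measures on X. Then μ and ν agree on every Γ-invariant Borel set if and only if there is a Borel probability measure λ on Γ × X with s_*λ = μ and t_*λ = ν, where s(γ, x) = x and t(γ, x) = γx. -/

import Mathlib

open MeasureTheory

namespace ThorissonAux

variable {X : Type*} [MeasurableSpace X] {Γ : Type*} [Group Γ]

/-- The greedy residual sequence: at each step we remove from the residuals the
largest piece of the first residual that can be transported onto the second by
`act (e n)`. -/
noncomputable def seq (act : Γ → X → X) (e : ℕ → Γ) (μ ν : Measure X) :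
    ℕ → Measure X × Measure X
  | 0 => (μ, ν)
  | n + 1 =>
      ((seq act e μ ν n).1 -
        ((seq act e μ ν n).1 ⊓ ((seq act e μ ν n).2.map (act (e n)⁻¹))),
       (seq act e μ ν n).2 -
        (((seq act e μ ν n).1 ⊓ ((seq act e μ ν n).2.map (act (e n)⁻¹))).map (act (e n))))

/-- The piece removed at step `n`. -/
noncomputable def kap (act : Γ → X → X) (e : ℕ → Γ) (μ ν : Measure X) (n : ℕ) : Measure X :=
  (seq act e μ ν n).1 ⊓ ((seq act e μ ν n).2.map (act (e n)⁻¹))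

lemma seq_succ_fst (act : Γ → X → X) (e : ℕ → Γ) (μ ν : Measure X) (n : ℕ) :
    (seq act e μ ν (n + 1)).1 = (seq act e μ ν n).1 - kap act e μ ν n := rfl

lemma seq_succ_snd (act : Γ → X → X) (e : ℕ → Γ) (μ ν : Measure X) (n : ℕ) :
    (seq act e μ ν (n + 1)).2 = (seq act e μ ν n).2 - (kap act e μ ν n).map (act (e n)) := rfl

end ThorissonAux

theorem thorisson_coupling {X : Type*} [MeasurableSpace X] [StandardBorelSpace X]
    {Γ : Type*} [Group Γ] [Countable Γ] [MeasurableSpace Γ]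
    [DiscreteMeasurableSpace Γ]
    (act : Γ → X → X) (hmeas : ∀ γ, Measurable (act γ))
    (hone : ∀ x, act 1 x = x)
    (hmul : ∀ γ δ x, act γ (act δ x) = act (γ * δ) x)
    (μ ν : Measure X) [IsProbabilityMeasure μ] [IsProbabilityMeasure ν] :
    (∀ S : Set X, MeasurableSet S → (∀ γ, act γ ⁻¹' S = S) → μ S = ν S) ↔
      ∃ lam : Measure (Γ × X), IsProbabilityMeasure lam ∧
        lam.map Prod.snd = μ ∧ lam.map (fun p => act p.1 p.2) = ν := by
  have ht_meas : Measurable fun p : Γ × X => act p.1 p.2 := by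
    have : Measurable fun q : X × Γ => act q.2 q.1 :=
      measurable_from_prod_countable_left fun γ => hmeas γ
    exact this.comp measurable_swap
  constructor
  · intro h
    obtain ⟨f, hf⟩ := exists_surjective_nat Γ
    set e : ℕ → Γ := fun n => f (Nat.unpair n).1 with he_def
    set M : ℕ → Measure X := fun n => (ThorissonAux.seq act e μ ν n).1 with hM_def
    set N : ℕ → Measure X := fun n => (ThorissonAux.seq act e μ ν n).2 with hN_def
    set K : ℕ → Measure X := ThorissonAux.kap act e μ ν with hK_def
    set T : ℕ → Measure X := fun n => (K n).map (act (e n)) with hT_def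
    -- cancellation of the action maps on measures
    have hcomp : ∀ γ δ : Γ, (act γ) ∘ (act δ) = act (γ * δ) := by
      intro γ δ; funext x; exact hmul γ δ x
    have hid : act (1 : Γ) = id := by funext x; exact hone x
    have cancel : ∀ (γ : Γ) (m : Measure X), (m.map (act γ)).map (act γ⁻¹) = m := by
      intro γ m
      rw [Measure.map_map (hmeas γ⁻¹) (hmeas γ), hcomp, inv_mul_cancel, hid, Measure.map_id]
    have cancel' : ∀ (γ : Γ) (m : Measure X), (m.map (act γ⁻¹)).map (act γ) = m := by
      intro γ m
      have := cancel γ⁻¹ m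
      rwa [inv_inv] at this
    -- basic structure of the recursion
    have hK_le_M : ∀ n, K n ≤ M n := fun n => inf_le_left
    have hT_le_N : ∀ n, T n ≤ N n := by
      intro n
      have h1 : K n ≤ (N n).map (act (e n)⁻¹) := inf_le_right
      have h2 := Measure.map_mono h1 (hmeas (e n))
      rwa [cancel' (e n) (N n)] at h2
    have hM_le : ∀ n, M n ≤ μ := by
      intro n
      induction n with
      | zero => exact le_rfl
      | succ n ih =>
        calc M (n + 1) = M n - K n := ThorissonAux.seq_succ_fst act e μ ν n
        _ ≤ M n := Measure.sub_le
        _ ≤ μ := ih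
    have hN_le : ∀ n, N n ≤ ν := by
      intro n
      induction n with
      | zero => exact le_rfl
      | succ n ih =>
        calc N (n + 1) = N n - T n := ThorissonAux.seq_succ_snd act e μ ν n
        _ ≤ N n := Measure.sub_le
        _ ≤ ν := ih
    have hKfin : ∀ n, IsFiniteMeasure (K n) := fun n =>
      isFiniteMeasure_of_le μ ((hK_le_M n).trans (hM_le n))
    have hTfin : ∀ n, IsFiniteMeasure (T n) := fun n =>
      isFiniteMeasure_of_le ν ((hT_le_N n).trans (hN_le n))
    have hMrec : ∀ n, M (n + 1) + K n = M n := by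
      intro n
      haveI := hKfin n
      exact Measure.sub_add_cancel_of_le (ν := K n) (hK_le_M n)
    have hNrec : ∀ n, N (n + 1) + T n = N n := by
      intro n
      haveI := hTfin n
      exact Measure.sub_add_cancel_of_le (ν := T n) (hT_le_N n)
    have hMsum : ∀ n, M n + ∑ k ∈ Finset.range n, K k = μ := by
      intro n
      induction n with
      | zero => simp [hM_def, ThorissonAux.seq]
      | succ n ih =>
        rw [Finset.sum_range_succ, add_comm (∑ k ∈ Finset.range n, K k) (K n), ← add_assoc,
          hMrec n]
        exact ih
    have hNsum : ∀ n, N n + ∑ k ∈ Finset.range n, T k = ν := by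
      intro n
      induction n with
      | zero => simp [hN_def, ThorissonAux.seq]
      | succ n ih =>
        rw [Finset.sum_range_succ, add_comm (∑ k ∈ Finset.range n, T k) (T n), ← add_assoc,
          hNrec n]
        exact ih
    have hKpart : ∀ n (s : Set X), ∑ k ∈ Finset.range n, K k s ≤ μ s := by
      intro n s
      have h1 := congrArg (fun m : Measure X => m s) (hMsum n)
      simp only [Measure.add_apply, Measure.finset_sum_apply] at h1
      calc ∑ k ∈ Finset.range n, K k s ≤ M n s + ∑ k ∈ Finset.range n, K k s := le_add_self
      _ = μ s := h1
    have hTpart : ∀ n (s : Set X), ∑ k ∈ Finset.range n, T k s ≤ ν s := by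
      intro n s
      have h1 := congrArg (fun m : Measure X => m s) (hNsum n)
      simp only [Measure.add_apply, Measure.finset_sum_apply] at h1
      calc ∑ k ∈ Finset.range n, T k s ≤ N n s + ∑ k ∈ Finset.range n, T k s := le_add_self
      _ = ν s := h1
    have hsumK_le : Measure.sum K ≤ μ := by
      refine Measure.le_iff'.mpr fun s => ?_
      rw [Measure.sum_apply_of_countable]
      exact ENNReal.tsum_le_of_sum_range_le fun n => hKpart n s
    have hsumT_le : Measure.sum T ≤ ν := by
      refine Measure.le_iff'.mpr fun s => ?_
      rw [Measure.sum_apply_of_countable]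
      exact ENNReal.tsum_le_of_sum_range_le fun n => hTpart n s
    haveI : IsFiniteMeasure (Measure.sum K) := isFiniteMeasure_of_le μ hsumK_le
    haveI : IsFiniteMeasure (Measure.sum T) := isFiniteMeasure_of_le ν hsumT_le
    set μ' : Measure X := μ - Measure.sum K with hμ'_def
    set ν' : Measure X := ν - Measure.sum T with hν'_def
    have hμ'add : μ' + Measure.sum K = μ := Measure.sub_add_cancel_of_le hsumK_le
    have hν'add : ν' + Measure.sum T = ν := Measure.sub_add_cancel_of_le hsumT_le
    have hμ'_le : ∀ n, μ' ≤ M n := by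
      intro n
      refine Measure.le_iff'.mpr fun s => ?_
      have h1 := congrArg (fun m : Measure X => m s) hμ'add
      have h2 := congrArg (fun m : Measure X => m s) (hMsum n)
      simp only [Measure.add_apply, Measure.finset_sum_apply] at h1 h2
      have hKs : (Measure.sum K) s ≠ ⊤ :=
        ((Measure.le_iff'.1 hsumK_le s).trans_lt (measure_lt_top μ s)).ne
      have hps : (∑ k ∈ Finset.range n, K k s) ≠ ⊤ := ((hKpart n s).trans_lt (measure_lt_top μ s)).ne
      have e1 : μ' s = μ s - (Measure.sum K) s := ENNReal.eq_sub_of_add_eq hKs h1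
      have e2 : M n s = μ s - ∑ k ∈ Finset.range n, K k s := ENNReal.eq_sub_of_add_eq hps h2
      rw [e1, e2]
      refine tsub_le_tsub_left ?_ (μ s)
      rw [Measure.sum_apply_of_countable]
      exact ENNReal.sum_le_tsum (Finset.range n)
    have hν'_le : ∀ n, ν' ≤ N n := by
      intro n
      refine Measure.le_iff'.mpr fun s => ?_
      have h1 := congrArg (fun m : Measure X => m s) hν'add
      have h2 := congrArg (fun m : Measure X => m s) (hNsum n)
      simp only [Measure.add_apply, Measure.finset_sum_apply] at h1 h2
      have hKs : (Measure.sum T) s ≠ ⊤ :=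
        ((Measure.le_iff'.1 hsumT_le s).trans_lt (measure_lt_top ν s)).ne
      have hps : (∑ k ∈ Finset.range n, T k s) ≠ ⊤ := ((hTpart n s).trans_lt (measure_lt_top ν s)).ne
      have e1 : ν' s = ν s - (Measure.sum T) s := ENNReal.eq_sub_of_add_eq hKs h1
      have e2 : N n s = ν s - ∑ k ∈ Finset.range n, T k s := ENNReal.eq_sub_of_add_eq hps h2
      rw [e1, e2]
      refine tsub_le_tsub_left ?_ (ν s)
      rw [Measure.sum_apply_of_countable]
      exact ENNReal.sum_le_tsum (Finset.range n)
    -- the removed pieces have summable total mass, so they tend to zero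
    have hKtend : Filter.Tendsto (fun n => K n Set.univ) Filter.atTop (nhds 0) := by
      refine ENNReal.tendsto_atTop_zero_of_tsum_ne_top ?_
      have h1 : ∑' n, K n Set.univ = (Measure.sum K) Set.univ :=
        (Measure.sum_apply_of_countable K Set.univ).symm
      rw [h1]
      exact ((Measure.le_iff'.1 hsumK_le Set.univ).trans_lt (measure_lt_top μ _)).ne
    -- the residual measures are mutually singular along the action
    have hinf : ∀ γ : Γ, μ' ⊓ ν'.map (act γ⁻¹) = 0 := by
      intro γ
      obtain ⟨k, hk⟩ := hf γ
      have key : ∀ m : ℕ, (μ' ⊓ ν'.map (act γ⁻¹)) Set.univ ≤ K (Nat.pair k m) Set.univ := by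
        intro m
        have he' : e (Nat.pair k m) = γ := by simp [he_def, Nat.unpair_pair, hk]
        have ha : μ' ⊓ ν'.map (act γ⁻¹) ≤ K (Nat.pair k m) := by
          refine le_inf (inf_le_left.trans (hμ'_le _)) ?_
          rw [he']
          exact inf_le_right.trans (Measure.map_mono (hν'_le _) (hmeas γ⁻¹))
        exact Measure.le_iff'.1 ha Set.univ
      have hsub : Filter.Tendsto (fun m => K (Nat.pair k m) Set.univ) Filter.atTop (nhds 0) := by
        refine hKtend.comp (StrictMono.tendsto_atTop ?_)
        exact fun a b hab => Nat.pair_lt_pair_right k hab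
      have h0 : (μ' ⊓ ν'.map (act γ⁻¹)) Set.univ ≤ 0 := ge_of_tendsto' hsub key
      exact Measure.measure_univ_eq_zero.mp (le_antisymm h0 (zero_le))
    have hsing : ∀ γ : Γ, μ' ⟂ₘ ν'.map (act γ⁻¹) := by
      intro γ
      refine Measure.mutuallySingular_of_disjoint (disjoint_iff.mpr ?_)
      rw [hinf γ]
      rfl
    -- build the invariant separating set
    set B : Set X := ⋃ γ : Γ, (hsing γ).nullSet with hB_def
    have hBmeas : MeasurableSet B :=
      MeasurableSet.iUnion fun γ => (hsing γ).measurableSet_nullSet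
    have hμ'B : μ' B = 0 := measure_iUnion_null fun γ => (hsing γ).measure_nullSet
    have hν'B : ∀ γ : Γ, ν' (act γ⁻¹ ⁻¹' Bᶜ) = 0 := by
      intro γ
      have h1 : (ν'.map (act γ⁻¹)) ((hsing γ).nullSet)ᶜ = 0 :=
        (hsing γ).measure_compl_nullSet
      have h2 : Bᶜ ⊆ ((hsing γ).nullSet)ᶜ :=
        Set.compl_subset_compl.mpr (Set.subset_iUnion (fun γ : Γ => (hsing γ).nullSet) γ)
      have h3 : (ν'.map (act γ⁻¹)) Bᶜ = 0 := measure_mono_null h2 h1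
      rwa [Measure.map_apply (hmeas γ⁻¹) hBmeas.compl] at h3
    set U : Set X := ⋃ γ : Γ, act γ⁻¹ ⁻¹' Bᶜ with hU_def
    have hUmeas : MeasurableSet U :=
      MeasurableSet.iUnion fun γ => (hmeas γ⁻¹) hBmeas.compl
    have hν'U : ν' U = 0 := measure_iUnion_null hν'B
    have hUinv : ∀ δ : Γ, act δ ⁻¹' U = U := by
      intro δ
      ext x
      simp only [hU_def, Set.mem_iUnion, Set.mem_preimage]
      constructor
      · rintro ⟨γ, hγ⟩
        refine ⟨δ⁻¹ * γ, ?_⟩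
        rwa [mul_inv_rev, inv_inv, ← hmul]
      · rintro ⟨γ, hγ⟩
        refine ⟨δ * γ, ?_⟩
        rwa [mul_inv_rev, hmul, mul_assoc, inv_mul_cancel, mul_one]
    have hμ'Uc : μ' Uᶜ = 0 := by
      refine measure_mono_null ?_ hμ'B
      intro x hx
      by_contra hxB
      exact hx (Set.mem_iUnion.mpr ⟨1, by rwa [Set.mem_preimage, inv_one, hone]⟩)
    -- use the hypothesis on the invariant set U
    have hμν : μ U = ν U := h U hUmeas hUinv
    have hTU : ∀ n, T n U = K n U := fun n => by
      rw [hT_def, Measure.map_apply (hmeas (e n)) hUmeas, hUinv]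
    have hsumTU : (Measure.sum T) U = (Measure.sum K) U := by
      rw [Measure.sum_apply_of_countable, Measure.sum_apply_of_countable]
      exact tsum_congr hTU
    have hKU_ne : (Measure.sum K) U ≠ ⊤ :=
      ((Measure.le_iff'.1 hsumK_le U).trans_lt (measure_lt_top μ U)).ne
    have hμ'U : μ' U = 0 := by
      have h1 := congrArg (fun m : Measure X => m U) hμ'add
      have h2 := congrArg (fun m : Measure X => m U) hν'add
      simp only [Measure.add_apply] at h1 h2
      have h3 : μ' U + (Measure.sum K) U = ν' U + (Measure.sum K) U := by
        rw [h1, ← hsumTU, h2]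
        exact hμν
      rw [hν'U, zero_add] at h3
      have h4 : μ' U + (Measure.sum K) U ≤ 0 + (Measure.sum K) U := by
        rw [zero_add]; exact le_of_eq h3
      exact le_antisymm ((ENNReal.add_le_add_iff_right hKU_ne).mp h4) (zero_le)
    have hμ'0 : μ' = 0 := by
      refine Measure.measure_univ_eq_zero.mp ?_
      have : μ' Set.univ ≤ μ' U + μ' Uᶜ := by
        rw [← Set.union_compl_self U]
        exact measure_union_le U Uᶜ
      rw [hμ'U, hμ'Uc, add_zero] at this
      exact le_antisymm this (zero_le)
    have hμeq : Measure.sum K = μ := by rw [← hμ'add, hμ'0, zero_add]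
    have hKTuniv : ∀ n, T n Set.univ = K n Set.univ := fun n => by
      rw [hT_def, Measure.map_apply (hmeas (e n)) MeasurableSet.univ, Set.preimage_univ]
    have hsumTuniv : (Measure.sum T) Set.univ = 1 := by
      rw [Measure.sum_apply_of_countable]
      rw [tsum_congr hKTuniv, ← Measure.sum_apply_of_countable, hμeq]
      exact measure_univ
    have hν'0 : ν' = 0 := by
      refine Measure.measure_univ_eq_zero.mp ?_
      have h2 := congrArg (fun m : Measure X => m Set.univ) hν'add
      simp only [Measure.add_apply] at h2
      rw [hsumTuniv] at h2
      have hν1 : ν Set.univ = 1 := measure_univ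
      rw [hν1] at h2
      have h4 : ν' Set.univ + 1 ≤ 0 + 1 := by rw [zero_add]; exact le_of_eq h2
      exact le_antisymm ((ENNReal.add_le_add_iff_right ENNReal.one_ne_top).mp h4) (zero_le)
    have hνeq : Measure.sum T = ν := by rw [← hν'add, hν'0, zero_add]
    -- assemble the coupling
    have hemb : ∀ n : ℕ, Measurable fun x : X => ((e n : Γ), x) := fun n =>
      measurable_prodMk_left
    refine ⟨Measure.sum fun n => (K n).map (fun x => ((e n : Γ), x)), ?_, ?_, ?_⟩
    · constructor
      rw [Measure.sum_apply_of_countable]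
      have h1 : ∀ n : ℕ, ((K n).map (fun x : X => ((e n : Γ), x))) Set.univ = K n Set.univ := by
        intro n
        rw [Measure.map_apply (hemb n) MeasurableSet.univ, Set.preimage_univ]
      rw [tsum_congr h1, ← Measure.sum_apply_of_countable, hμeq]
      exact measure_univ
    · refine Measure.ext fun s hs => ?_
      rw [Measure.map_apply measurable_snd hs, Measure.sum_apply_of_countable]
      have h1 : ∀ n : ℕ, ((K n).map (fun x : X => ((e n : Γ), x))) (Prod.snd ⁻¹' s) = K n s := by
        intro n
        rw [Measure.map_apply (hemb n) (measurable_snd hs)]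
        rfl
      rw [tsum_congr h1, ← Measure.sum_apply_of_countable, hμeq]
    · refine Measure.ext fun s hs => ?_
      rw [Measure.map_apply ht_meas hs, Measure.sum_apply_of_countable]
      have h1 : ∀ n : ℕ,
          ((K n).map (fun x : X => ((e n : Γ), x))) ((fun p : Γ × X => act p.1 p.2) ⁻¹' s)
            = T n s := by
        intro n
        rw [Measure.map_apply (hemb n) (ht_meas hs), hT_def,
          Measure.map_apply (hmeas (e n)) hs]
        rfl
      rw [tsum_congr h1, ← Measure.sum_apply_of_countable, hνeq]
  · rintro ⟨lam, hp, hs, ht⟩ S hS hinv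
    have hpre : (fun p : Γ × X => act p.1 p.2) ⁻¹' S = Prod.snd ⁻¹' S := by
      ext ⟨γ, x⟩
      exact Set.ext_iff.1 (hinv γ) x
    rw [← hs, ← ht, Measure.map_apply measurable_snd hS, Measure.map_apply ht_meas hS, hpre]
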